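/- Under condition (H1), the maps u ↦ t^+(u) and u ↦ t^-(u) are continuous on the unit sphere S of X. -/

import Mathlib

open Metric Set Filter Topology

lemma sign_lemma (φ g : ℝ → ℝ) (a b : ℝ)
    (ha : 0 < a) (hab : a < b)
    (hderiv : ∀ t : ℝ, 0 < t → HasDerivAt φ (g t) t)
    (hgcont : ∀ t : ℝ, 0 < t → ContinuousAt g t)
    (hmin : IsLocalMin φ a) (hmax : IsLocalMax φ b)
    (hcrit : ∀ t : ℝ, 0 < t → (g t = 0 ↔ t = a ∨ t = b)) :
    (∀ t, 0 < t → t < a → g t < 0) ∧ (∀ t, a < t → t < b → 0 < g t) ∧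
      (∀ t, b < t → g t < 0) := by
  have hb : 0 < b := ha.trans hab
  have hne : ∀ t, 0 < t → t ≠ a → t ≠ b → g t ≠ 0 := by
    intro t ht hta htb h0
    rcases (hcrit t ht).mp h0 with h | h <;> [exact hta h; exact htb h]
  have hφcont : ∀ t : ℝ, 0 < t → ContinuousAt φ t := fun t ht => (hderiv t ht).continuousAt
  have hφconton : ∀ x y : ℝ, 0 < x → ContinuousOn φ (Icc x y) := by
    intro x y hx
    intro s hs
    exact (hφcont s (lt_of_lt_of_le hx hs.1)).continuousWithinAt
  have hgconton : ∀ x y : ℝ, 0 < x → ContinuousOn g (Icc x y) := by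
    intro x y hx s hs
    exact (hgcont s (lt_of_lt_of_le hx hs.1)).continuousWithinAt
  refine ⟨?_, ?_, ?_⟩
  · -- negative on (0, a)
    intro t ht hta
    -- find c ∈ (t, a) with g c < 0
    obtain ⟨δ, hδ, hδmin⟩ := Metric.eventually_nhds_iff.mp hmin
    set t1 : ℝ := max ((t + a) / 2) (a - δ / 2) with ht1def
    have ht1t : t < t1 := lt_max_of_lt_left (by linarith)
    have ht1a : t1 < a := max_lt (by linarith) (by linarith)
    have ht1pos : 0 < t1 := ht.trans ht1t
    have ht1near : dist t1 a < δ := by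
      rw [Real.dist_eq, abs_lt]
      constructor
      · have := le_max_right ((t + a) / 2) (a - δ / 2); linarith
      · linarith
    have hφt1 : φ a ≤ φ t1 := hδmin ht1near
    obtain ⟨c, hc, hceq⟩ := exists_hasDerivAt_eq_slope φ g ht1a (hφconton t1 a ht1pos)
      (fun x hx => hderiv x (ht1pos.trans hx.1))
    have hcpos : 0 < c := ht1pos.trans hc.1
    have hgc : g c < 0 := by
      have : g c ≤ 0 := by
        rw [hceq]
        apply div_nonpos_of_nonpos_of_nonneg <;> linarith
      exact lt_of_le_of_ne this (hne c hcpos (ne_of_lt hc.2) (ne_of_lt (hc.2.trans hab)))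
    by_contra h
    push_neg at h
    have hgt : 0 < g t :=
      lt_of_le_of_ne h (Ne.symm (hne t ht (ne_of_lt hta) (ne_of_lt (hta.trans hab))))
    have h0 : (0 : ℝ) ∈ Ioo (g c) (g t) := ⟨hgc, hgt⟩
    obtain ⟨x, hx, hgx⟩ := intermediate_value_Ioo' (ht1t.trans hc.1).le (hgconton t c ht) h0
    have hxpos : 0 < x := ht.trans hx.1
    have hxa : x < a := hx.2.trans hc.2
    exact hne x hxpos (ne_of_lt hxa) (ne_of_lt (hxa.trans hab)) hgx
  · -- positive on (a, b)
    intro t hat htb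
    have htpos : 0 < t := ha.trans hat
    obtain ⟨δ, hδ, hδmin⟩ := Metric.eventually_nhds_iff.mp hmin
    set t1 : ℝ := min ((a + t) / 2) (a + δ / 2) with ht1def
    have hat1 : a < t1 := lt_min (by linarith) (by linarith)
    have ht1t : t1 < t := min_lt_of_left_lt (by linarith)
    have ht1near : dist t1 a < δ := by
      rw [Real.dist_eq, abs_lt]
      constructor
      · linarith
      · have := min_le_right ((a + t) / 2) (a + δ / 2); linarith
    have hφt1 : φ a ≤ φ t1 := hδmin ht1near
    obtain ⟨c, hc, hceq⟩ := exists_hasDerivAt_eq_slope φ g hat1 (hφconton a t1 ha)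
      (fun x hx => hderiv x (ha.trans hx.1))
    have hcpos : 0 < c := ha.trans hc.1
    have hcb : c < b := (hc.2.trans ht1t).trans htb
    have hgc : 0 < g c := by
      have : 0 ≤ g c := by
        rw [hceq]
        apply div_nonneg <;> linarith
      exact lt_of_le_of_ne this (Ne.symm (hne c hcpos (ne_of_gt hc.1) (ne_of_lt hcb)))
    by_contra h
    push_neg at h
    have hgt : g t < 0 :=
      lt_of_le_of_ne h (hne t htpos (ne_of_gt hat) (ne_of_lt htb))
    have h0 : (0 : ℝ) ∈ Ioo (g t) (g c) := ⟨hgt, hgc⟩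
    have hct : c ≤ t := le_of_lt (hc.2.trans ht1t)
    obtain ⟨x, hx, hgx⟩ := intermediate_value_Ioo' hct (hgconton c t hcpos) h0
    have hxa : a < x := hc.1.trans hx.1
    have hxb : x < b := hx.2.trans htb
    exact hne x (ha.trans hxa) (ne_of_gt hxa) (ne_of_lt hxb) hgx
  · -- negative on (b, ∞)
    intro t hbt
    have htpos : 0 < t := hb.trans hbt
    obtain ⟨δ, hδ, hδmax⟩ := Metric.eventually_nhds_iff.mp hmax
    set t1 : ℝ := min ((b + t) / 2) (b + δ / 2) with ht1def
    have hbt1 : b < t1 := lt_min (by linarith) (by linarith)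
    have ht1t : t1 < t := min_lt_of_left_lt (by linarith)
    have ht1near : dist t1 b < δ := by
      rw [Real.dist_eq, abs_lt]
      constructor
      · linarith
      · have := min_le_right ((b + t) / 2) (b + δ / 2); linarith
    have hφt1 : φ t1 ≤ φ b := hδmax ht1near
    obtain ⟨c, hc, hceq⟩ := exists_hasDerivAt_eq_slope φ g hbt1 (hφconton b t1 hb)
      (fun x hx => hderiv x (hb.trans hx.1))
    have hcpos : 0 < c := hb.trans hc.1
    have hgc : g c < 0 := by
      have : g c ≤ 0 := by
        rw [hceq]
        apply div_nonpos_of_nonpos_of_nonneg <;> linarith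
      exact lt_of_le_of_ne this (hne c hcpos (ne_of_gt (hab.trans hc.1)) (ne_of_gt hc.1))
    by_contra h
    push_neg at h
    have hgt : 0 < g t :=
      lt_of_le_of_ne h (Ne.symm (hne t htpos (ne_of_gt (hab.trans hbt)) (ne_of_gt hbt)))
    have h0 : (0 : ℝ) ∈ Ioo (g c) (g t) := ⟨hgc, hgt⟩
    have hct : c ≤ t := le_of_lt (hc.2.trans ht1t)
    obtain ⟨x, hx, hgx⟩ := intermediate_value_Ioo hct (hgconton c t hcpos) h0
    have hxb : b < x := hc.1.trans hx.1
    exact hne x (hb.trans hxb) (ne_of_gt (hab.trans hxb)) (ne_of_gt hxb) hgx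

/-- Under (H1), the maps `u ↦ t⁺(u)` and `u ↦ t⁻(u)` are continuous
on the unit sphere `S` of `X`. -/
theorem statement_0
    {X : Type*} [NormedAddCommGroup X] [NormedSpace ℝ X] [CompleteSpace X]
    [UniformConvexSpace X]
    (hinf : ¬ FiniteDimensional ℝ X)
    (hnorm : ContDiffOn ℝ 1 (fun x : X => ‖x‖) {x : X | x ≠ 0})
    (Φ : X → ℝ) (Φ' : X → (X →L[ℝ] ℝ))
    (hΦdiff : ∀ u : X, u ≠ 0 → HasFDerivAt Φ (Φ' u) u)
    (hΦcont : ContinuousOn Φ' {x : X | x ≠ 0})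
    (tp tm : X → ℝ)
    -- (H1): for every `u ≠ 0`, the fibering map `t ↦ Φ(t • u)` (t > 0) has exactly two
    -- critical points `tp u < tm u`, a local minimum followed by a local maximum
    (h1pos : ∀ u : X, u ≠ 0 → 0 < tp u)
    (h1lt : ∀ u : X, u ≠ 0 → tp u < tm u)
    (h1min : ∀ u : X, u ≠ 0 → IsLocalMin (fun t : ℝ => Φ (t • u)) (tp u))
    (h1max : ∀ u : X, u ≠ 0 → IsLocalMax (fun t : ℝ => Φ (t • u)) (tm u))
    (h1crit : ∀ u : X, u ≠ 0 → ∀ t : ℝ, 0 < t →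
      (Φ' (t • u) u = 0 ↔ t = tp u ∨ t = tm u))
    -- `tp` is bounded away from zero and above on compact subsets of the sphere
    (h1tp : ∀ K : Set X, K ⊆ sphere (0 : X) 1 → IsCompact K →
      ∃ a b : ℝ, 0 < a ∧ ∀ u ∈ K, a ≤ tp u ∧ tp u ≤ b)
    -- `tm` is bounded away from zero on the sphere and above on compact subsets
    (h1tm0 : ∃ a : ℝ, 0 < a ∧ ∀ u ∈ sphere (0 : X) 1, a ≤ tm u)
    (h1tm1 : ∀ K : Set X, K ⊆ sphere (0 : X) 1 → IsCompact K →
      ∃ b : ℝ, ∀ u ∈ K, tm u ≤ b) :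
    ContinuousOn tp (sphere (0 : X) 1) ∧ ContinuousOn tm (sphere (0 : X) 1) := by
  -- derivative of the fibering map
  have hderiv : ∀ v : X, v ≠ 0 → ∀ t : ℝ, 0 < t →
      HasDerivAt (fun s : ℝ => Φ (s • v)) (Φ' (t • v) v) t := by
    intro v hv t ht
    have h1 : HasDerivAt (fun s : ℝ => s • v) v t := by
      simpa using (hasDerivAt_id t).smul_const v
    exact (hΦdiff (t • v) (smul_ne_zero ht.ne' hv)).comp_hasDerivAt t h1
  -- continuity of Φ' at nonzero points
  have hΦ'at : ∀ x : X, x ≠ 0 → ContinuousAt Φ' x := by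
    intro x hx
    exact hΦcont.continuousAt (IsOpen.mem_nhds isOpen_ne hx)
  have happly : Continuous fun p : (X →L[ℝ] ℝ) × X => p.1 p.2 :=
    isBoundedBilinearMap_apply.continuous
  -- continuity of g_v in t
  have hgcont : ∀ v : X, v ≠ 0 → ∀ t : ℝ, 0 < t →
      ContinuousAt (fun s : ℝ => Φ' (s • v) v) t := by
    intro v hv t ht
    have h1 : ContinuousAt (fun s : ℝ => s • v) t := by fun_prop
    have h2 : ContinuousAt (fun s : ℝ => Φ' (s • v)) t :=
      ContinuousAt.comp (x := t) (hΦ'at (t • v) (smul_ne_zero ht.ne' hv)) h1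
    exact happly.continuousAt.comp (ContinuousAt.prodMk h2 continuousAt_const)
  -- continuity of v ↦ Φ' (t • v) v at u ≠ 0, for t > 0
  have hvcont : ∀ u : X, u ≠ 0 → ∀ t : ℝ, 0 < t →
      ContinuousAt (fun v : X => Φ' (t • v) v) u := by
    intro u hu t ht
    have h1 : ContinuousAt (fun v : X => t • v) u := by fun_prop
    have h2 : ContinuousAt (fun v : X => Φ' (t • v)) u :=
      ContinuousAt.comp (x := u) (hΦ'at (t • u) (smul_ne_zero ht.ne' hu)) h1
    exact happly.continuousAt.comp (ContinuousAt.prodMk h2 continuousAt_id)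
  -- sign facts for every v ≠ 0
  have hsign : ∀ v : X, v ≠ 0 →
      (∀ t, 0 < t → t < tp v → Φ' (t • v) v < 0) ∧
      (∀ t, tp v < t → t < tm v → 0 < Φ' (t • v) v) ∧
      (∀ t, tm v < t → Φ' (t • v) v < 0) := by
    intro v hv
    exact sign_lemma (fun s => Φ (s • v)) (fun s => Φ' (s • v) v) (tp v) (tm v)
      (h1pos v hv) (h1lt v hv) (hderiv v hv) (hgcont v hv) (h1min v hv) (h1max v hv)
      (h1crit v hv)
  have hevne : ∀ u : X, u ≠ 0 → ∀ᶠ v in 𝓝 u, v ≠ 0 := by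
    intro u hu
    exact IsOpen.eventually_mem isOpen_ne hu
  constructor
  · -- continuity of tp
    intro u husp
    have hu : u ≠ 0 := by
      intro h; rw [h] at husp; simp at husp
    apply ContinuousAt.continuousWithinAt
    rw [ContinuousAt, Metric.tendsto_nhds]
    intro ε hε
    obtain ⟨sgn1, sgn2, sgn3⟩ := hsign u hu
    have hpu : 0 < tp u := h1pos u hu
    have hlt : tp u < tm u := h1lt u hu
    set t1 : ℝ := max (tp u / 2) (tp u - ε / 2) with ht1def
    set t2 : ℝ := min ((tp u + tm u) / 2) (tp u + ε / 2) with ht2def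
    have ht1pos : 0 < t1 := lt_max_of_lt_left (by linarith)
    have ht1lt : t1 < tp u := max_lt (by linarith) (by linarith)
    have ht1ge : tp u - ε / 2 ≤ t1 := le_max_right _ _
    have ht2gt : tp u < t2 := lt_min (by linarith) (by linarith)
    have ht2lt : t2 < tm u := min_lt_of_left_lt (by linarith)
    have ht2le : t2 ≤ tp u + ε / 2 := min_le_right _ _
    have ht2pos : 0 < t2 := hpu.trans ht2gt
    have hg1 : Φ' (t1 • u) u < 0 := sgn1 t1 ht1pos ht1lt
    have hg2 : 0 < Φ' (t2 • u) u := sgn2 t2 ht2gt ht2lt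
    have hev1 : ∀ᶠ v in 𝓝 u, Φ' (t1 • v) v < 0 :=
      (hvcont u hu t1 ht1pos).eventually_lt continuousAt_const hg1
    have hev2 : ∀ᶠ v in 𝓝 u, 0 < Φ' (t2 • v) v :=
      continuousAt_const.eventually_lt (hvcont u hu t2 ht2pos) hg2
    filter_upwards [hevne u hu, hev1, hev2] with v hv0 hv1 hv2
    obtain ⟨s1v, s2v, s3v⟩ := hsign v hv0
    -- tp v < t2
    have hlt2 : tp v < t2 := by
      by_contra h
      push_neg at h
      rcases eq_or_lt_of_le h with h | h
      · have : Φ' (t2 • v) v = 0 := (h1crit v hv0 t2 ht2pos).mpr (Or.inl h)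
        linarith
      · exact absurd (s1v t2 ht2pos h) (by linarith)
    -- t1 < tp v
    have hgt1 : t1 < tp v := by
      by_contra h
      push_neg at h
      rcases lt_trichotomy t1 (tm v) with h' | h' | h'
      · rcases eq_or_lt_of_le h with h'' | h''
        · have : Φ' (t1 • v) v = 0 := (h1crit v hv0 t1 ht1pos).mpr (Or.inl h''.symm)
          linarith
        · exact absurd (s2v t1 h'' h') (by linarith)
      · have : Φ' (t1 • v) v = 0 := (h1crit v hv0 t1 ht1pos).mpr (Or.inr h')
        linarith
      · have : tm v < t2 := h'.trans (by
          have : t1 < t2 := ht1lt.trans ht2gt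
          linarith)
        exact absurd (s3v t2 this) (by linarith)
    rw [Real.dist_eq, abs_lt]
    constructor <;> linarith
  · -- continuity of tm
    intro u husp
    have hu : u ≠ 0 := by
      intro h; rw [h] at husp; simp at husp
    apply ContinuousAt.continuousWithinAt
    rw [ContinuousAt, Metric.tendsto_nhds]
    intro ε hε
    obtain ⟨sgn1, sgn2, sgn3⟩ := hsign u hu
    have hpu : 0 < tp u := h1pos u hu
    have hlt : tp u < tm u := h1lt u hu
    set s1 : ℝ := max ((tp u + tm u) / 2) (tm u - ε / 2) with hs1def
    set s2 : ℝ := tm u + ε / 2 with hs2def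
    have hs1gt : tp u < s1 := lt_max_of_lt_left (by linarith)
    have hs1lt : s1 < tm u := max_lt (by linarith) (by linarith)
    have hs1ge : tm u - ε / 2 ≤ s1 := le_max_right _ _
    have hs1pos : 0 < s1 := hpu.trans hs1gt
    have hs2gt : tm u < s2 := by simp [hs2def]; linarith
    have hs2pos : 0 < s2 := (hpu.trans hlt).trans hs2gt
    have hg1 : 0 < Φ' (s1 • u) u := sgn2 s1 hs1gt hs1lt
    have hg2 : Φ' (s2 • u) u < 0 := sgn3 s2 hs2gt
    have hev1 : ∀ᶠ v in 𝓝 u, 0 < Φ' (s1 • v) v :=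
      continuousAt_const.eventually_lt (hvcont u hu s1 hs1pos) hg1
    have hev2 : ∀ᶠ v in 𝓝 u, Φ' (s2 • v) v < 0 :=
      (hvcont u hu s2 hs2pos).eventually_lt continuousAt_const hg2
    filter_upwards [hevne u hu, hev1, hev2] with v hv0 hv1 hv2
    obtain ⟨s1v, s2v, s3v⟩ := hsign v hv0
    -- tp v < s1 < tm v
    have hkey : tp v < s1 ∧ s1 < tm v := by
      rcases lt_trichotomy s1 (tp v) with h | h | h
      · exact absurd (s1v s1 hs1pos h) (by linarith)
      · exact absurd ((h1crit v hv0 s1 hs1pos).mpr (Or.inl h)) (by linarith)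
      · rcases lt_trichotomy s1 (tm v) with h' | h' | h'
        · exact ⟨h, h'⟩
        · exact absurd ((h1crit v hv0 s1 hs1pos).mpr (Or.inr h')) (by linarith)
        · exact absurd (s3v s1 h') (by linarith)
    -- tm v < s2
    have hkey2 : tm v < s2 := by
      by_contra h
      push_neg at h
      rcases eq_or_lt_of_le h with h' | h'
      · exact absurd ((h1crit v hv0 s2 hs2pos).mpr (Or.inr h')) (by linarith)
      · have hps2 : tp v < s2 := hkey.1.trans (hs1lt.trans hs2gt)
        exact absurd (s2v s2 hps2 h') (by linarith)
    rw [Real.dist_eq, abs_lt]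
    have := hkey.2
    constructor <;> simp [hs2def] at hkey2 ⊢ <;> linarith
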